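/- arXiv:1609.07559 — 3 statements merged into one kernel-verified Lean document; each statement's English description precedes it below -/
import Mathlib

section
/- For β > 0, the function f(x) = βx - 2·log((e^{βx} + e^β)/(1 + e^β)) satisfies ∫₀¹ e^{f(x)} dx = sinh(β)/β. -/
open Real

/-- Constraint equation for the optimal path, case `K ≥ S₀`:
`∫₀¹ e^{f(x)} dx = sinh β / β` where
`f(x) = βx - 2 log((e^{βx} + e^β)/(1 + e^β))`. -/
theorem stmt4 (β : ℝ) (hβ : 0 < β)
    (f : ℝ → ℝ)
    (hf : ∀ x, f x = β * x - 2 * Real.log ((Real.exp (β * x) + Real.exp β) / (1 + Real.exp β))) :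
    ∫ x in (0:ℝ)..1, Real.exp (f x) = Real.sinh β / β := by
  have hβ' : β ≠ 0 := ne_of_gt hβ
  have hden : ∀ x : ℝ, 0 < Real.exp (β * x) + Real.exp β := fun x => by positivity
  have h1 : (0:ℝ) < 1 + Real.exp β := by positivity
  set c : ℝ := (1 + Real.exp β) ^ 2 with hc
  have hexpf : ∀ x, Real.exp (f x)
      = c * Real.exp (β * x) / (Real.exp (β * x) + Real.exp β) ^ 2 := by
    intro x
    rw [hf x, Real.exp_sub, two_mul, Real.exp_add,
      Real.exp_log (div_pos (hden x) h1)]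
    field_simp [hc, (hden x).ne']
    ring
  have hderiv : ∀ x ∈ Set.uIcc (0:ℝ) 1,
      HasDerivAt (fun x => -c / (β * (Real.exp (β * x) + Real.exp β)))
        (Real.exp (f x)) x := by
    intro x _
    have h0 : HasDerivAt (fun x : ℝ => β * x) β x := by
      simpa using (hasDerivAt_id x).const_mul β
    have hg : HasDerivAt (fun x => β * (Real.exp (β * x) + Real.exp β))
        (β * (Real.exp (β * x) * β)) x := ((h0.exp).add_const _).const_mul β
    have hne : β * (Real.exp (β * x) + Real.exp β) ≠ 0 :=
      mul_ne_zero hβ' (hden x).ne'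
    have := (hasDerivAt_const x (-c)).div hg hne
    refine this.congr_deriv ?_
    rw [hexpf x]
    field_simp
    ring
  have hcont : Continuous fun x => Real.exp (f x) := by
    have : (fun x => Real.exp (f x))
        = fun x => c * Real.exp (β * x) / (Real.exp (β * x) + Real.exp β) ^ 2 :=
      funext hexpf
    rw [this]
    exact (continuous_const.mul ((continuous_const.mul continuous_id).rexp)).div
      (((continuous_const.mul continuous_id).rexp.add continuous_const).pow 2)
      (fun x => by positivity)
  rw [intervalIntegral.integral_eq_sub_of_hasDerivAt hderiv
    (hcont.intervalIntegrable 0 1)]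
  have h2 : Real.exp (β * 1) = Real.exp β := by norm_num
  have h3 : Real.exp (β * 0) = 1 := by norm_num
  rw [h2, h3, Real.sinh_eq, Real.exp_neg]
  have he : Real.exp β ≠ 0 := (Real.exp_pos β).ne'
  field_simp [hc]
  ring
end

section
/- For β > 0, with f(x) = βx - 2·log((e^{βx} + e^β)/(1 + e^β)), one has (1/2)∫₀¹ (f'(x))² dx = β²/2 - β·tanh(β/2). -/
open Real

lemma exp_sum_pos (β x : ℝ) : 0 < Real.exp (β * x) + Real.exp β :=
  add_pos (Real.exp_pos _) (Real.exp_pos _)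

lemma deriv_f_eq (β : ℝ) (f : ℝ → ℝ)
    (hf : ∀ x, f x = β * x - 2 * Real.log ((Real.exp (β * x) + Real.exp β) / (1 + Real.exp β)))
    (x : ℝ) :
    HasDerivAt f (β - 2 * (Real.exp (β * x) * β / (Real.exp (β * x) + Real.exp β))) x := by
  have hpos := exp_sum_pos β x
  have hden : (0:ℝ) < 1 + Real.exp β := by positivity
  have h1 : HasDerivAt (fun y : ℝ => β * y) β x := by
    simpa using (hasDerivAt_id x).const_mul β
  have h2 : HasDerivAt (fun y : ℝ => Real.exp (β * y)) (Real.exp (β * x) * β) x := h1.exp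
  have h3 : HasDerivAt (fun y : ℝ => (Real.exp (β * y) + Real.exp β) / (1 + Real.exp β))
      (Real.exp (β * x) * β / (1 + Real.exp β)) x := (h2.add_const _).div_const _
  have hne : (Real.exp (β * x) + Real.exp β) / (1 + Real.exp β) ≠ 0 := by positivity
  have h4 := (h3.log hne)
  have h5 : HasDerivAt (fun y : ℝ => β * y - 2 * Real.log ((Real.exp (β * y) + Real.exp β) / (1 + Real.exp β))) _ x := ((h1.sub ((h4.const_mul 2))) : HasDerivAt _ _ x)
  have heq : (fun y : ℝ => β * y - 2 * Real.log ((Real.exp (β * y) + Real.exp β) / (1 + Real.exp β))) = f := by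
    funext y; rw [hf y]
  rw [heq] at h5
  convert h5 using 1
  field_simp

/-- Rate function value in the Black–Scholes model, case `K ≥ S₀`:
`(1/2)∫₀¹ (f'(x))² dx = β²/2 - β tanh(β/2)` for
`f(x) = βx - 2 log((e^{βx} + e^β)/(1 + e^β))`, `β > 0`. -/
theorem stmt6 (β : ℝ) (hβ : 0 < β)
    (f : ℝ → ℝ)
    (hf : ∀ x, f x = β * x - 2 * Real.log ((Real.exp (β * x) + Real.exp β) / (1 + Real.exp β))) :
    (1/2) * ∫ x in (0:ℝ)..1, (deriv f x) ^ 2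
      = β ^ 2 / 2 - β * Real.tanh (β / 2) := by
  set D : ℝ → ℝ := fun x => β - 2 * (Real.exp (β * x) * β / (Real.exp (β * x) + Real.exp β)) with hD
  have hderiv : ∀ x, deriv f x = D x := fun x => (deriv_f_eq β f hf x).deriv
  set G : ℝ → ℝ := fun x => β ^ 2 * x + 4 * β * Real.exp β / (Real.exp (β * x) + Real.exp β) with hG
  have hGderiv : ∀ x, HasDerivAt G ((deriv f x) ^ 2) x := by
    intro x
    have hpos := exp_sum_pos β x
    have h1 : HasDerivAt (fun y : ℝ => β * y) β x := by
      simpa using (hasDerivAt_id x).const_mul β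
    have h2 : HasDerivAt (fun y : ℝ => Real.exp (β * y)) (Real.exp (β * x) * β) x := h1.exp
    have h3 : HasDerivAt (fun y : ℝ => (Real.exp (β * y) + Real.exp β)⁻¹)
        (-(Real.exp (β * x) * β) / (Real.exp (β * x) + Real.exp β) ^ 2) x :=
      (h2.add_const _).inv hpos.ne'
    have h4 : HasDerivAt (fun y : ℝ => β ^ 2 * y) (β ^ 2) x := by
      simpa using (hasDerivAt_id x).const_mul (β ^ 2)
    have h5 : HasDerivAt (fun y : ℝ => β ^ 2 * y + 4 * β * Real.exp β * (Real.exp (β * y) + Real.exp β)⁻¹) _ x :=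
      h4.add ((h3.const_mul (4 * β * Real.exp β)))
    have hGeq : G = fun y : ℝ => β ^ 2 * y + 4 * β * Real.exp β * (Real.exp (β * y) + Real.exp β)⁻¹ := by
      funext y; simp [hG, div_eq_mul_inv]
    rw [hGeq]
    convert h5 using 1
    rw [hderiv x, hD]
    field_simp
    ring
  have hcont : Continuous fun x => (deriv f x) ^ 2 := by
    have : (fun x => (deriv f x) ^ 2) = fun x => (D x) ^ 2 := by
      funext x; rw [hderiv x]
    rw [this, hD]
    have : Continuous fun x : ℝ => Real.exp (β * x) + Real.exp β :=
      (Real.continuous_exp.comp (continuous_const.mul continuous_id)).add continuous_const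
    exact ((continuous_const.sub (continuous_const.mul
      (((Real.continuous_exp.comp (continuous_const.mul continuous_id)).mul continuous_const).div
        this fun x => (exp_sum_pos β x).ne'))).pow 2)
  have hint : (∫ x in (0:ℝ)..1, (deriv f x) ^ 2) = G 1 - G 0 :=
    intervalIntegral.integral_eq_sub_of_hasDerivAt (fun x _ => hGderiv x)
      (hcont.intervalIntegrable 0 1)
  rw [hint]
  have htanh : Real.tanh (β / 2) = (Real.exp β - 1) / (Real.exp β + 1) := by
    have h : Real.exp (β/2) * Real.exp (β/2) = Real.exp β := by rw [← Real.exp_add]; ring_nf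
    have hpos : 0 < Real.exp (β/2) := Real.exp_pos _
    have hpos2 : 0 < Real.exp β := Real.exp_pos _
    rw [Real.tanh_eq_sinh_div_cosh, Real.sinh_eq, Real.cosh_eq, Real.exp_neg]
    field_simp
    nlinarith [h, hpos, hpos2]
  rw [htanh, hG]
  have h0 : Real.exp (β * 0) = 1 := by norm_num
  have h1 : Real.exp (β * 1) = Real.exp β := by norm_num
  simp only [h0, h1]
  have hpos : (0:ℝ) < Real.exp β := Real.exp_pos _
  field_simp
  ring
end

section
/- For ξ ∈ (0, π/2), with f(x) = log(cos²ξ / cos²(ξ(x-1))), one has (1/2)∫₀¹ (f'(x))² dx = 2ξ·(tan ξ - ξ). -/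
open Real Set

lemma aux_cos_pos (ξ : ℝ) (hξ : ξ ∈ Ioo 0 (π / 2)) {x : ℝ} (hx : x ∈ Icc (0:ℝ) 1) :
    0 < Real.cos (ξ * (x - 1)) := by
  apply Real.cos_pos_of_mem_Ioo
  obtain ⟨hx0, hx1⟩ := hx
  obtain ⟨hξ0, hξπ⟩ := hξ
  constructor
  · nlinarith
  · nlinarith

lemma aux_deriv (ξ : ℝ) (hξ : ξ ∈ Ioo 0 (π / 2))
    (f : ℝ → ℝ)
    (hf : ∀ x, f x = Real.log (Real.cos ξ ^ 2 / Real.cos (ξ * (x - 1)) ^ 2))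
    {x : ℝ} (hcx : Real.cos (ξ * (x - 1)) ≠ 0) :
    deriv f x = 2 * ξ * Real.tan (ξ * (x - 1)) := by
  have hcξ : Real.cos ξ ≠ 0 := ne_of_gt (Real.cos_pos_of_mem_Ioo ⟨by linarith [hξ.1, Real.pi_pos], hξ.2⟩)
  set h : ℝ → ℝ := fun y => 2 * Real.log (Real.cos ξ) - 2 * Real.log (Real.cos (ξ * (y - 1))) with hh
  have heq : f =ᶠ[nhds x] h := by
    have hopen : IsOpen {y : ℝ | Real.cos (ξ * (y - 1)) ≠ 0} := by
      have : Continuous fun y : ℝ => Real.cos (ξ * (y - 1)) := by continuity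
      exact isOpen_ne_fun this continuous_const
    filter_upwards [hopen.mem_nhds hcx] with y hy
    have hy : Real.cos (ξ * (y - 1)) ≠ 0 := hy
    rw [hf y, hh]
    rw [Real.log_div (by positivity) (by positivity), Real.log_pow, Real.log_pow]
    push_cast; ring
  rw [heq.deriv_eq]
  have c : HasDerivAt (fun y : ℝ => ξ * (y - 1)) ξ x := by
    simpa using ((hasDerivAt_id x).sub_const 1).const_mul ξ
  have hcos : HasDerivAt (fun y : ℝ => Real.cos (ξ * (y - 1)))
      (-Real.sin (ξ * (x - 1)) * ξ) x := c.cos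
  have hlog : HasDerivAt (fun y : ℝ => Real.log (Real.cos (ξ * (y - 1))))
      ((-Real.sin (ξ * (x - 1)) * ξ) / Real.cos (ξ * (x - 1))) x := hcos.log hcx
  have hH : HasDerivAt h (2 * ξ * Real.tan (ξ * (x - 1))) x := by
    have := (hlog.const_mul 2).const_sub (2 * Real.log (Real.cos ξ))
    refine this.congr_deriv ?_
    rw [Real.tan_eq_sin_div_cos]
    field_simp
  exact hH.deriv

/-- Rate function value in the Black–Scholes model, case `K ≤ S₀`:
`(1/2)∫₀¹ (f'(x))² dx = 2ξ(tan ξ - ξ)` for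
`f(x) = log(cos²ξ / cos²(ξ(x-1)))`, `ξ ∈ (0, π/2)`. -/
theorem stmt7 (ξ : ℝ) (hξ : ξ ∈ Ioo 0 (π / 2))
    (f : ℝ → ℝ)
    (hf : ∀ x, f x = Real.log (Real.cos ξ ^ 2 / Real.cos (ξ * (x - 1)) ^ 2)) :
    (1/2) * ∫ x in (0:ℝ)..1, (deriv f x) ^ 2 = 2 * ξ * (Real.tan ξ - ξ) := by
  have hicc : (Set.uIcc (0:ℝ) 1) = Icc (0:ℝ) 1 := by
    rw [Set.uIcc_of_le]; norm_num
  have hcongr : ∀ x ∈ Set.uIcc (0:ℝ) 1,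
      (deriv f x) ^ 2 = (2 * ξ * Real.tan (ξ * (x - 1))) ^ 2 := by
    intro x hx
    rw [hicc] at hx
    rw [aux_deriv ξ hξ f hf (ne_of_gt (aux_cos_pos ξ hξ hx))]
  have h1 : ∫ x in (0:ℝ)..1, (deriv f x) ^ 2
      = ∫ x in (0:ℝ)..1, (2 * ξ * Real.tan (ξ * (x - 1))) ^ 2 :=
    intervalIntegral.integral_congr hcongr
  have hcont : ContinuousOn (fun x : ℝ => (2 * ξ * Real.tan (ξ * (x - 1))) ^ 2)
      (Set.uIcc (0:ℝ) 1) := by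
    rw [hicc]
    apply ContinuousOn.pow
    apply ContinuousOn.mul continuousOn_const
    intro x hx
    have := (aux_cos_pos ξ hξ hx).ne'
    have hin : ContinuousAt (fun y : ℝ => ξ * (y - 1)) x := by fun_prop
    exact (ContinuousAt.comp (f := fun y : ℝ => ξ * (y - 1))
      (Real.continuousAt_tan.2 this) hin).continuousWithinAt
  have hint : IntervalIntegrable (fun x : ℝ => (2 * ξ * Real.tan (ξ * (x - 1))) ^ 2)
      MeasureTheory.volume 0 1 := hcont.intervalIntegrable
  have hF : ∀ x ∈ Set.uIcc (0:ℝ) 1,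
      HasDerivAt (fun y : ℝ => 4 * ξ * Real.tan (ξ * (y - 1)) - 4 * ξ ^ 2 * y)
        ((2 * ξ * Real.tan (ξ * (x - 1))) ^ 2) x := by
    intro x hx
    rw [hicc] at hx
    have hcx : Real.cos (ξ * (x - 1)) ≠ 0 := (aux_cos_pos ξ hξ hx).ne'
    have c : HasDerivAt (fun y : ℝ => ξ * (y - 1)) ξ x := by
      simpa using ((hasDerivAt_id x).sub_const 1).const_mul ξ
    have htan : HasDerivAt (fun y : ℝ => Real.tan (ξ * (y - 1)))
        (1 / Real.cos (ξ * (x - 1)) ^ 2 * ξ) x :=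
      by have := (Real.hasDerivAt_tan hcx).comp x c; exact this
    have : HasDerivAt (fun y : ℝ => 4 * ξ * Real.tan (ξ * (y - 1)) - 4 * ξ ^ 2 * y)
        (4 * ξ * (1 / Real.cos (ξ * (x - 1)) ^ 2 * ξ) - 4 * ξ ^ 2) x := by
      exact ((htan.const_mul (4 * ξ)).sub ((hasDerivAt_id x).const_mul (4 * ξ ^ 2))).congr_deriv (by ring)
    convert this using 1
    rw [Real.tan_eq_sin_div_cos]
    have hs : Real.sin (ξ * (x - 1)) ^ 2 = 1 - Real.cos (ξ * (x - 1)) ^ 2 := Real.sin_sq (ξ * (x - 1))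
    field_simp
    nlinarith [hs]
  rw [h1, intervalIntegral.integral_eq_sub_of_hasDerivAt hF hint]
  have ht0 : Real.tan (ξ * ((1:ℝ) - 1)) = 0 := by norm_num
  have ht1 : Real.tan (ξ * ((0:ℝ) - 1)) = -Real.tan ξ := by
    norm_num [Real.tan_neg]
  simp only [ht0, ht1]
  ring
end
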